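/- Let B and C be the central binomial and Catalan generating functions over ℚ. For every n ≥ 1, the coefficient of z^n in 2zBC + z²B²C² equals 4^{n−1} + (1/2)·binom(2n,n); that is, the number of new type vertices over all right branch new type trees with n edges is 4^{n−1} + (1/2)·binom(2n,n). -/

import Mathlib

open PowerSeries Finset

/-- The central binomial generating function `B = ∑ binom(2n,n) zⁿ` over `ℚ`. -/
noncomputable def Bgf : PowerSeries ℚ := PowerSeries.mk fun n => ((2 * n).choose n : ℚ)

/-- The Catalan generating function `C = ∑ Cₙ zⁿ` over `ℚ`. -/
noncomputable def Cgf : PowerSeries ℚ := PowerSeries.mk fun n => (catalan n : ℚ)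

lemma coeff_four_mul (n : ℕ) (f : ℚ⟦X⟧) :
    PowerSeries.coeff n (4 * f) = 4 * PowerSeries.coeff n f := by
  rw [show (4 : ℚ⟦X⟧) = PowerSeries.C 4 from (map_ofNat (PowerSeries.C) 4).symm,
    coeff_C_mul]

lemma coeff_two_mul (n : ℕ) (f : ℚ⟦X⟧) :
    PowerSeries.coeff n (2 * f) = 2 * PowerSeries.coeff n f := by
  rw [show (2 : ℚ⟦X⟧) = PowerSeries.C 2 from (map_ofNat (PowerSeries.C) 2).symm,
    coeff_C_mul]

lemma coeff_X_mul_deriv (n : ℕ) (f : ℚ⟦X⟧) :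
    PowerSeries.coeff n (PowerSeries.X * d⁄dX ℚ f) = PowerSeries.coeff n f * n := by
  cases n with
  | zero => simp
  | succ m => rw [coeff_succ_X_mul, coeff_derivative]; push_cast; ring

lemma hC : Cgf = 1 + PowerSeries.X * Cgf ^ 2 := by
  ext n
  cases n with
  | zero => simp [Cgf]
  | succ m =>
    rw [map_add, coeff_succ_X_mul, pow_two, coeff_mul]
    simp only [Cgf, coeff_mk, coeff_one, Nat.succ_ne_zero, if_false, zero_add]
    rw [catalan_succ']
    push_cast
    rfl

lemma psDerivMul (f g : ℚ⟦X⟧) : d⁄dX ℚ (f * g) = f * d⁄dX ℚ g + g * d⁄dX ℚ f := by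
  simpa [smul_eq_mul] using Derivation.leibniz (d⁄dX ℚ) f g

lemma hB : Bgf = Cgf + PowerSeries.X * d⁄dX ℚ Cgf := by
  ext n
  rw [map_add, coeff_X_mul_deriv]
  simp only [Bgf, Cgf, coeff_mk]
  have h := succ_mul_catalan_eq_centralBinom n
  have h2 : ((2 * n).choose n : ℚ) = ((n + 1) * catalan n : ℕ) := by
    rw [h]; rfl
  rw [h2]; push_cast; ring

lemma hDB : d⁄dX ℚ Bgf = 4 * (PowerSeries.X * d⁄dX ℚ Bgf) + 2 * Bgf := by
  ext n
  rw [map_add, coeff_four_mul, coeff_two_mul, coeff_X_mul_deriv, coeff_derivative]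
  simp only [Bgf, coeff_mk]
  have h := Nat.succ_mul_centralBinom_succ n
  have h2 : ((n + 1) * (2 * (n + 1)).choose (n + 1) : ℚ)
      = (2 * (2 * n + 1) * (2 * n).choose n : ℚ) := by
    exact_mod_cast congrArg (Nat.cast : ℕ → ℚ) h
  push_cast at h2 ⊢
  nlinarith [h2]

lemma L1 : 2 * PowerSeries.X * Bgf * Cgf = Bgf - 1 := by
  have h2 : d⁄dX ℚ Cgf = Cgf ^ 2 + PowerSeries.X * (2 * Cgf * d⁄dX ℚ Cgf) := by
    have := congrArg (d⁄dX ℚ) hC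
    rw [map_add, Derivation.map_one_eq_zero, zero_add, psDerivMul, derivative_X, pow_two,
      psDerivMul] at this
    linear_combination this
  linear_combination (2 * PowerSeries.X * Cgf - 1) * hB - hC - PowerSeries.X * h2

lemma hS : d⁄dX ℚ (Bgf ^ 2) = 4 * (PowerSeries.X * d⁄dX ℚ (Bgf ^ 2)) + 4 * Bgf ^ 2 := by
  have hd : d⁄dX ℚ (Bgf ^ 2) = 2 * Bgf * d⁄dX ℚ Bgf := by
    rw [pow_two, psDerivMul]; ring
  rw [hd]
  linear_combination 2 * Bgf * hDB

lemma L2 (n : ℕ) : PowerSeries.coeff n (Bgf ^ 2) = 4 ^ n := by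
  induction n with
  | zero =>
    rw [pow_two, coeff_zero_eq_constantCoeff, map_mul]
    have : constantCoeff Bgf = 1 := by
      rw [Bgf, PowerSeries.constantCoeff_mk]; norm_num
    rw [this]; norm_num
  | succ m ih =>
    have h := congrArg (PowerSeries.coeff m) hS
    rw [map_add, coeff_four_mul, coeff_four_mul, coeff_X_mul_deriv, coeff_derivative] at h
    have hm : (m : ℚ) + 1 ≠ 0 := by positivity
    have : PowerSeries.coeff (m + 1) (Bgf ^ 2) = 4 * PowerSeries.coeff m (Bgf ^ 2) := by
      refine mul_right_cancel₀ hm ?_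
      linear_combination h
    rw [this, ih]; ring

/-- For `n ≥ 1`, the number of new type vertices over all right branch new type trees
with `n` edges is `[zⁿ](2zBC + z²B²C²) = 4ⁿ⁻¹ + (1/2)·binom(2n,n)`. -/
theorem stmt13 (n : ℕ) (hn : 1 ≤ n) :
    PowerSeries.coeff n
        (2 * PowerSeries.X * Bgf * Cgf + PowerSeries.X ^ 2 * Bgf ^ 2 * Cgf ^ 2) =
      4 ^ (n - 1) + (1 / 2 : ℚ) * ((2 * n).choose n : ℚ) := by
  obtain ⟨m, rfl⟩ : ∃ m, n = m + 1 := ⟨n - 1, (Nat.succ_pred_eq_of_pos hn).symm⟩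
  have key : (4 : ℚ⟦X⟧) * (2 * PowerSeries.X * Bgf * Cgf
      + PowerSeries.X ^ 2 * Bgf ^ 2 * Cgf ^ 2) = Bgf ^ 2 + 2 * Bgf - 3 := by
    linear_combination (2 * PowerSeries.X * Bgf * Cgf + Bgf + 3) * L1
  have h := congrArg (PowerSeries.coeff (m + 1)) key
  rw [coeff_four_mul, map_sub, map_add, map_add, coeff_two_mul, L2] at h
  have h3 : PowerSeries.coeff (m + 1) (3 : ℚ⟦X⟧) = 0 := by
    rw [show (3 : ℚ⟦X⟧) = PowerSeries.C 3 from (map_ofNat (PowerSeries.C) 3).symm,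
      coeff_C]
    simp
  rw [h3] at h
  have hb : PowerSeries.coeff (m + 1) Bgf = ((2 * (m + 1)).choose (m + 1) : ℚ) := by
    simp [Bgf]
  rw [hb] at h
  have : PowerSeries.coeff (m + 1)
      (2 * PowerSeries.X * Bgf * Cgf + PowerSeries.X ^ 2 * Bgf ^ 2 * Cgf ^ 2)
      = (4 ^ (m + 1) + 2 * ((2 * (m + 1)).choose (m + 1) : ℚ)) / 4 := by
    field_simp; rw [map_add]; linarith [h]
  rw [this]
  simp only [Nat.add_sub_cancel]
  field_simp
  ring
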